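/- arXiv:2104.13550 — 4 statements merged into one kernel-verified Lean document; each statement's English description precedes it below -/
import Mathlib

section
/- (Explicit SVD of the diffusion matrix under Open boundary conditions.) Let n ≥ 1 and let S_d = S_d(n; 1, 1). Define U ∈ ℝ^{n×n} by U_{i,j} = √(2/(n+1))·sin(π(n−j+1)i/(n+1)); define V ∈ ℝ^{(n+1)×(n+1)} by V_{i,j} = √(2/(n+1))·cos(π(n−j+1)(2i−1)/(2(n+1))) for 1 ≤ j ≤ n, with every entry of column n+1 of V equal to 1/√(n+1); and let Σ be the n × (n+1) matrix with Σ_{j,j} = 2 sin(π(n−j+1)/(2(n+1))) for 1 ≤ j ≤ n and all other entries 0. Then U and V are orthogonal matrices and S_d = U Σ Vᵀ. In particular S_d has full row rank n. -/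
open Matrix Real
open scoped Matrix

noncomputable section

/-- The diffusion-only stoichiometry matrix `S_d(n; b₁, b₂)`. -/
def Sd (n : ℕ) (b₁ b₂ : ℝ) : Matrix (Fin n) (Fin (n+1)) ℝ :=
  Matrix.of fun i j =>
    if (j : ℕ) = (i : ℕ) ∧ (i : ℕ) = 0 then b₁
    else if (j : ℕ) = (i : ℕ) then 1
    else if (j : ℕ) = (i : ℕ) + 1 ∧ (i : ℕ) = n - 1 then -b₂
    else if (j : ℕ) = (i : ℕ) + 1 then (-1 : ℝ)
    else 0


lemma xne (N : ℕ) (hN : 0 < N) (m : ℤ) (h : ¬ ((2*(N:ℤ)) ∣ m)) :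
    Complex.exp ((π * m / N : ℝ) * Complex.I) ≠ 1 := by
  intro hx
  rw [Complex.exp_eq_one_iff] at hx
  obtain ⟨k, hk⟩ := hx
  have h2 : (π * m / N : ℝ) = k * (2 * π) := by
    have := congrArg Complex.im hk
    simpa using this
  have hNne : (N:ℝ) ≠ 0 := Nat.cast_ne_zero.mpr hN.ne'
  have h3 : (m:ℝ) = 2 * N * k := by
    field_simp at h2
    nlinarith [Real.pi_pos]
  exact h ⟨k, by exact_mod_cast h3⟩

lemma xpow (N : ℕ) (m : ℤ) (i : ℕ) :
    Complex.exp ((π * m / N : ℝ) * Complex.I) ^ i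
      = Complex.exp (((i : ℝ) * (π * m / N) : ℝ) * Complex.I) := by
  rw [← Complex.exp_nat_mul]
  congr 1
  push_cast
  ring

lemma xN (N : ℕ) (hN : 0 < N) (m : ℤ) :
    Complex.exp ((π * m / N : ℝ) * Complex.I) ^ N = ((-1 : ℂ)) ^ m := by
  rw [xpow]
  have hNne : (N:ℝ) ≠ 0 := Nat.cast_ne_zero.mpr hN.ne'
  have hr : ((N:ℝ) * (π * m / N) : ℝ) = π * m := by field_simp
  rw [hr]
  have : ((π * (m:ℝ) : ℝ) : ℂ) * Complex.I = (m : ℂ) * ((π:ℝ) * Complex.I) := by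
    push_cast; ring
  rw [this, Complex.exp_int_mul, Complex.exp_pi_mul_I]

lemma cos_as_re (t : ℝ) : Real.cos t = (Complex.exp ((t:ℝ) * Complex.I)).re :=
  (Complex.exp_ofReal_mul_I_re t).symm

lemma cosSum2 (N : ℕ) (hN : 0 < N) (m : ℤ) (h : ¬ ((2*(N:ℤ)) ∣ m)) :
    ∑ i ∈ Finset.range N, Real.cos (π * m * i / N)
      = if (2:ℤ) ∣ m then 0 else 1 := by
  set θ : ℝ := π * m / N with hθ
  set x : ℂ := Complex.exp ((θ:ℝ) * Complex.I) with hxdef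
  have hxne : x ≠ 1 := xne N hN m h
  have hsum : ∑ i ∈ Finset.range N, Real.cos (π * m * i / N)
      = ((x ^ N - 1) / (x - 1)).re := by
    rw [← geom_sum_eq hxne, Complex.re_sum]
    refine Finset.sum_congr rfl fun i _ => ?_
    have h1 : π * m * i / N = (i : ℝ) * θ := by rw [hθ]; ring
    rw [h1, cos_as_re, hxdef, xpow]
  rw [hsum, xN N hN m]
  have hre : x.re = Real.cos θ := Complex.exp_ofReal_mul_I_re θ
  have him : x.im = Real.sin θ := Complex.exp_ofReal_mul_I_im θ
  rcases Int.even_or_odd m with he | ho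
  · rw [he.neg_one_zpow, if_pos he.two_dvd]
    simp
  · rw [if_neg (by
      rintro ⟨k, hk⟩
      exact (Int.not_even_iff_odd.mpr ho) ⟨k, by omega⟩)]
    rw [ho.neg_one_zpow]
    have hc1 : Real.cos θ ≠ 1 := by
      intro hc
      apply hxne
      have hs : Real.sin θ = 0 := by nlinarith [Real.sin_sq_add_cos_sq θ]
      apply Complex.ext <;> simp [hre, him, hc, hs]
    have hnum : ((-1 : ℂ) - 1) = ((-2 : ℝ) : ℂ) := by norm_num
    rw [hnum, Complex.div_re, Complex.normSq_apply]
    simp only [Complex.sub_re, Complex.sub_im, Complex.one_re, Complex.one_im,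
      Complex.ofReal_re, Complex.ofReal_im, hre, him, sub_zero, zero_mul, zero_div, add_zero]
    have hpyth := Real.sin_sq_add_cos_sq θ
    have h5 : Real.cos θ - 1 ≠ 0 := sub_ne_zero.mpr hc1
    have h6 : 0 < (Real.cos θ - 1)^2 := by positivity
    have hD0 : (Real.cos θ - 1) * (Real.cos θ - 1) + Real.sin θ * Real.sin θ ≠ 0 := by nlinarith
    rw [div_eq_one_iff_eq hD0]
    nlinarith

lemma cosSum1 (N : ℕ) (hN : 0 < N) (m : ℤ) (h : ¬ ((2*(N:ℤ)) ∣ m)) :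
    ∑ i ∈ Finset.range N, Real.cos (π * m * (2*i+1) / (2*N)) = 0 := by
  set θ : ℝ := π * m / N with hθ
  set α : ℝ := π * m / (2*N) with hα
  set x : ℂ := Complex.exp ((θ:ℝ) * Complex.I) with hxdef
  set e : ℂ := Complex.exp ((α:ℝ) * Complex.I) with hedef
  have hxne : x ≠ 1 := xne N hN m h
  have hNne : (N:ℝ) ≠ 0 := Nat.cast_ne_zero.mpr hN.ne'
  have hsum : ∑ i ∈ Finset.range N, Real.cos (π * m * (2*i+1) / (2*N))
      = (e * ((x ^ N - 1) / (x - 1))).re := by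
    rw [← geom_sum_eq hxne, Finset.mul_sum, Complex.re_sum]
    refine Finset.sum_congr rfl fun i _ => ?_
    have h1 : π * m * (2*i+1) / (2*N) = α + (i : ℝ) * θ := by
      rw [hα, hθ]; field_simp; ring
    have h2 : e * Complex.exp ((θ:ℝ) * Complex.I) ^ i
        = Complex.exp ((↑(α + (i:ℝ)*θ)) * Complex.I) := by
      rw [hedef, xpow, ← Complex.exp_add]
      refine congrArg Complex.exp ?_
      rw [hθ, hα]
      push_cast
      ring
    rw [h1, cos_as_re, hxdef, h2]
  rw [hsum, xN N hN m]
  rcases Int.even_or_odd m with he | ho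
  · rw [he.neg_one_zpow]
    norm_num
  · rw [ho.neg_one_zpow]
    have hsne : Real.sin α ≠ 0 := by
      intro hs
      rw [Real.sin_eq_zero_iff] at hs
      obtain ⟨k, hk⟩ := hs
      apply h
      have h3 : (m:ℝ) = 2 * N * k := by
        rw [hα] at hk
        field_simp at hk
        nlinarith [Real.pi_pos]
      exact ⟨k, by exact_mod_cast h3⟩
    have hx1 : x - 1 ≠ 0 := sub_ne_zero.mpr hxne
    have hsC : (Real.sin α : ℂ) ≠ 0 := Complex.ofReal_ne_zero.mpr hsne
    have he' : e = (Real.cos α : ℂ) + (Real.sin α : ℂ) * Complex.I := by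
      rw [hedef, Complex.exp_mul_I, ← Complex.ofReal_cos, ← Complex.ofReal_sin]
    have hx2 : x = e * e := by
      rw [hxdef, hedef, ← Complex.exp_add]
      refine congrArg Complex.exp ?_
      rw [hθ, hα]
      push_cast
      field_simp
      ring
    have hp : (Real.sin α : ℂ)^2 + (Real.cos α : ℂ)^2 = 1 := by
      have := Real.sin_sq_add_cos_sq α
      exact_mod_cast congrArg (Complex.ofReal) this
    have key : e * ((-1 - 1) / (x - 1)) = ((Real.sin α)⁻¹ : ℝ) * Complex.I := by
      rw [← mul_div_assoc, div_eq_iff hx1, hx2, he', Complex.ofReal_inv]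
      rw [inv_mul_eq_div, div_mul_eq_mul_div, eq_div_iff hsC]
      linear_combination (-Complex.I) * hp +
        (-2*(Real.cos α : ℂ)*(Real.sin α : ℂ) - (Real.sin α : ℂ)^2*Complex.I) * Complex.I_sq
    rw [key]
    simp

lemma notdvd (n : ℕ) (m : ℤ) (h1 : m ≠ 0) (h2 : |m| ≤ 2*n+1) : ¬ ((2*((n:ℤ)+1)) ∣ m) := by
  intro hd
  have := Int.le_of_dvd (abs_pos.mpr h1) ((dvd_abs _ _).mpr hd)
  omega

lemma cosSum2' (n : ℕ) (m : ℤ) (h : ¬((2*((n:ℤ)+1)) ∣ m)) :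
    ∑ i ∈ Finset.range n, Real.cos (π * m * ((i:ℝ)+1) / ((n:ℝ)+1))
      = (if (2:ℤ) ∣ m then (0:ℝ) else 1) - 1 := by
  have h0 := cosSum2 (n+1) n.succ_pos m (by push_cast; exact h)
  rw [Finset.sum_range_succ'] at h0
  push_cast at h0
  rw [mul_zero, zero_div, Real.cos_zero] at h0
  by_cases hd : (2:ℤ) ∣ m <;> simp only [hd, if_true, if_false] at * <;> linarith

lemma cosSum1' (n : ℕ) (m : ℤ) (h : ¬((2*((n:ℤ)+1)) ∣ m)) :
    ∑ i ∈ Finset.range (n+1), Real.cos (π * m * (2*(i:ℝ)+1) / (2*((n:ℝ)+1))) = 0 := by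
  have h0 := cosSum1 (n+1) n.succ_pos m (by push_cast; exact h)
  push_cast at h0
  exact h0

lemma two_sin_mul_sin (A B : ℝ) :
    2 * (Real.sin A * Real.sin B) = Real.cos (A - B) - Real.cos (A + B) := by
  rw [Real.cos_sub, Real.cos_add]; ring

lemma two_cos_mul_cos (A B : ℝ) :
    2 * (Real.cos A * Real.cos B) = Real.cos (A - B) + Real.cos (A + B) := by
  rw [Real.cos_sub, Real.cos_add]; ring

lemma dst (n a b : ℕ) (ha1 : 1 ≤ a) (ha2 : a ≤ n) (hb1 : 1 ≤ b) (hb2 : b ≤ n) :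
    ∑ i ∈ Finset.range n,
      Real.sin (π * a * ((i:ℝ)+1) / ((n:ℝ)+1)) * Real.sin (π * b * ((i:ℝ)+1) / ((n:ℝ)+1))
      = if a = b then ((n:ℝ)+1)/2 else 0 := by
  have hterm : ∀ i ∈ Finset.range n,
      Real.sin (π * a * ((i:ℝ)+1) / ((n:ℝ)+1)) * Real.sin (π * b * ((i:ℝ)+1) / ((n:ℝ)+1))
        = (Real.cos (π * (((a:ℤ) - b : ℤ) : ℝ) * ((i:ℝ)+1) / ((n:ℝ)+1))
           - Real.cos (π * (((a:ℤ) + b : ℤ) : ℝ) * ((i:ℝ)+1) / ((n:ℝ)+1))) / 2 := by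
    intro i _
    have h2 := two_sin_mul_sin (π * a * ((i:ℝ)+1) / ((n:ℝ)+1)) (π * b * ((i:ℝ)+1) / ((n:ℝ)+1))
    have e1 : π * a * ((i:ℝ)+1) / ((n:ℝ)+1) - π * b * ((i:ℝ)+1) / ((n:ℝ)+1)
        = π * (((a:ℤ) - b : ℤ) : ℝ) * ((i:ℝ)+1) / ((n:ℝ)+1) := by push_cast; ring
    have e2 : π * a * ((i:ℝ)+1) / ((n:ℝ)+1) + π * b * ((i:ℝ)+1) / ((n:ℝ)+1)
        = π * (((a:ℤ) + b : ℤ) : ℝ) * ((i:ℝ)+1) / ((n:ℝ)+1) := by push_cast; ring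
    rw [e1, e2] at h2
    linarith
  rw [Finset.sum_congr rfl hterm, ← Finset.sum_div, Finset.sum_sub_distrib]
  have hsum2 : ∑ i ∈ Finset.range n,
      Real.cos (π * (((a:ℤ) + b : ℤ) : ℝ) * ((i:ℝ)+1) / ((n:ℝ)+1))
      = (if (2:ℤ) ∣ ((a:ℤ) + b) then (0:ℝ) else 1) - 1 :=
    cosSum2' n _ (notdvd n _ (by omega) (by rw [abs_le]; omega))
  by_cases hab : a = b
  · subst hab
    rw [if_pos rfl]
    have hz : ((a:ℤ) - a : ℤ) = 0 := by ring
    have hsum1 : ∑ i ∈ Finset.range n,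
        Real.cos (π * (((a:ℤ) - a : ℤ) : ℝ) * ((i:ℝ)+1) / ((n:ℝ)+1)) = n := by
      rw [Finset.sum_congr rfl (fun i _ => by rw [hz]; norm_num : ∀ i ∈ Finset.range n,
        Real.cos (π * (((a:ℤ) - a : ℤ) : ℝ) * ((i:ℝ)+1) / ((n:ℝ)+1)) = 1)]
      simp
    rw [hsum1, hsum2, if_pos ⟨a, by ring⟩]
    ring
  · rw [if_neg hab]
    have hsum1 : ∑ i ∈ Finset.range n,
        Real.cos (π * (((a:ℤ) - b : ℤ) : ℝ) * ((i:ℝ)+1) / ((n:ℝ)+1))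
        = (if (2:ℤ) ∣ ((a:ℤ) - b) then (0:ℝ) else 1) - 1 :=
      cosSum2' n _ (notdvd n _ (by omega) (by rw [abs_le]; omega))
    rw [hsum1, hsum2]
    have hpar : ((2:ℤ) ∣ ((a:ℤ) - b)) ↔ ((2:ℤ) ∣ ((a:ℤ) + b)) := by omega
    by_cases hd : (2:ℤ) ∣ ((a:ℤ) - b)
    · rw [if_pos hd, if_pos (hpar.mp hd)]; ring
    · rw [if_neg hd, if_neg (fun hc => hd (hpar.mpr hc))]; ring

lemma dct (n a b : ℕ) (ha1 : 1 ≤ a) (ha2 : a ≤ n) (hb1 : 1 ≤ b) (hb2 : b ≤ n) :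
    ∑ i ∈ Finset.range (n+1),
      Real.cos (π * a * (2*(i:ℝ)+1) / (2*((n:ℝ)+1))) * Real.cos (π * b * (2*(i:ℝ)+1) / (2*((n:ℝ)+1)))
      = if a = b then ((n:ℝ)+1)/2 else 0 := by
  have hterm : ∀ i ∈ Finset.range (n+1),
      Real.cos (π * a * (2*(i:ℝ)+1) / (2*((n:ℝ)+1))) * Real.cos (π * b * (2*(i:ℝ)+1) / (2*((n:ℝ)+1)))
        = (Real.cos (π * (((a:ℤ) - b : ℤ) : ℝ) * (2*(i:ℝ)+1) / (2*((n:ℝ)+1)))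
           + Real.cos (π * (((a:ℤ) + b : ℤ) : ℝ) * (2*(i:ℝ)+1) / (2*((n:ℝ)+1)))) / 2 := by
    intro i _
    have h2 := two_cos_mul_cos (π * a * (2*(i:ℝ)+1) / (2*((n:ℝ)+1))) (π * b * (2*(i:ℝ)+1) / (2*((n:ℝ)+1)))
    have e1 : π * a * (2*(i:ℝ)+1) / (2*((n:ℝ)+1)) - π * b * (2*(i:ℝ)+1) / (2*((n:ℝ)+1))
        = π * (((a:ℤ) - b : ℤ) : ℝ) * (2*(i:ℝ)+1) / (2*((n:ℝ)+1)) := by push_cast; ring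
    have e2 : π * a * (2*(i:ℝ)+1) / (2*((n:ℝ)+1)) + π * b * (2*(i:ℝ)+1) / (2*((n:ℝ)+1))
        = π * (((a:ℤ) + b : ℤ) : ℝ) * (2*(i:ℝ)+1) / (2*((n:ℝ)+1)) := by push_cast; ring
    rw [e1, e2] at h2
    linarith
  rw [Finset.sum_congr rfl hterm, ← Finset.sum_div, Finset.sum_add_distrib]
  have hsum2 : ∑ i ∈ Finset.range (n+1),
      Real.cos (π * (((a:ℤ) + b : ℤ) : ℝ) * (2*(i:ℝ)+1) / (2*((n:ℝ)+1))) = 0 :=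
    cosSum1' n _ (notdvd n _ (by omega) (by rw [abs_le]; omega))
  by_cases hab : a = b
  · subst hab
    rw [if_pos rfl]
    have hz : ((a:ℤ) - a : ℤ) = 0 := by ring
    have hsum1 : ∑ i ∈ Finset.range (n+1),
        Real.cos (π * (((a:ℤ) - a : ℤ) : ℝ) * (2*(i:ℝ)+1) / (2*((n:ℝ)+1))) = (n:ℝ)+1 := by
      rw [Finset.sum_congr rfl (fun i _ => by rw [hz]; norm_num : ∀ i ∈ Finset.range (n+1),
        Real.cos (π * (((a:ℤ) - a : ℤ) : ℝ) * (2*(i:ℝ)+1) / (2*((n:ℝ)+1))) = 1)]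
      simp
    rw [hsum1, hsum2]
    ring
  · rw [if_neg hab]
    have hsum1 : ∑ i ∈ Finset.range (n+1),
        Real.cos (π * (((a:ℤ) - b : ℤ) : ℝ) * (2*(i:ℝ)+1) / (2*((n:ℝ)+1))) = 0 :=
      cosSum1' n _ (notdvd n _ (by omega) (by rw [abs_le]; omega))
    rw [hsum1, hsum2]
    ring

lemma dct0 (n a : ℕ) (ha1 : 1 ≤ a) (ha2 : a ≤ n) :
    ∑ i ∈ Finset.range (n+1), Real.cos (π * a * (2*(i:ℝ)+1) / (2*((n:ℝ)+1))) = 0 := by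
  have h0 := cosSum1' n (a:ℤ) (notdvd n _ (by omega) (by rw [abs_le]; omega))
  rw [Finset.sum_congr rfl (fun i _ => by push_cast; ring_nf : ∀ i ∈ Finset.range (n+1),
    Real.cos (π * a * (2*(i:ℝ)+1) / (2*((n:ℝ)+1)))
      = Real.cos (π * ((a:ℤ):ℝ) * (2*(i:ℝ)+1) / (2*((n:ℝ)+1))))]
  exact h0

lemma dctRow (n i i' : ℕ) (hi : i ≤ n) (hi' : i' ≤ n) :
    ∑ j ∈ Finset.range n,
      Real.cos (π * ((j:ℝ)+1) * (2*(i:ℝ)+1) / (2*((n:ℝ)+1)))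
        * Real.cos (π * ((j:ℝ)+1) * (2*(i':ℝ)+1) / (2*((n:ℝ)+1)))
      = if i = i' then (n:ℝ)/2 else -(1/2) := by
  have hterm : ∀ j ∈ Finset.range n,
      Real.cos (π * ((j:ℝ)+1) * (2*(i:ℝ)+1) / (2*((n:ℝ)+1)))
        * Real.cos (π * ((j:ℝ)+1) * (2*(i':ℝ)+1) / (2*((n:ℝ)+1)))
        = (Real.cos (π * (((i:ℤ) - i' : ℤ) : ℝ) * ((j:ℝ)+1) / ((n:ℝ)+1))
           + Real.cos (π * (((i:ℤ) + i' + 1 : ℤ) : ℝ) * ((j:ℝ)+1) / ((n:ℝ)+1))) / 2 := by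
    intro j _
    have h2 := two_cos_mul_cos (π * ((j:ℝ)+1) * (2*(i:ℝ)+1) / (2*((n:ℝ)+1)))
      (π * ((j:ℝ)+1) * (2*(i':ℝ)+1) / (2*((n:ℝ)+1)))
    have e1 : π * ((j:ℝ)+1) * (2*(i:ℝ)+1) / (2*((n:ℝ)+1)) - π * ((j:ℝ)+1) * (2*(i':ℝ)+1) / (2*((n:ℝ)+1))
        = π * (((i:ℤ) - i' : ℤ) : ℝ) * ((j:ℝ)+1) / ((n:ℝ)+1) := by
      have hN : ((n:ℝ)+1) ≠ 0 := by positivity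
      push_cast; field_simp; ring
    have e2 : π * ((j:ℝ)+1) * (2*(i:ℝ)+1) / (2*((n:ℝ)+1)) + π * ((j:ℝ)+1) * (2*(i':ℝ)+1) / (2*((n:ℝ)+1))
        = π * (((i:ℤ) + i' + 1 : ℤ) : ℝ) * ((j:ℝ)+1) / ((n:ℝ)+1) := by
      have hN : ((n:ℝ)+1) ≠ 0 := by positivity
      push_cast; field_simp; ring
    rw [e1, e2] at h2
    linarith
  rw [Finset.sum_congr rfl hterm, ← Finset.sum_div, Finset.sum_add_distrib]
  have hodd : ¬ ((2:ℤ) ∣ ((i:ℤ) + i' + 1)) ∨ True := Or.inr trivial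
  have hsum2 : ∑ j ∈ Finset.range n,
      Real.cos (π * (((i:ℤ) + i' + 1 : ℤ) : ℝ) * ((j:ℝ)+1) / ((n:ℝ)+1))
      = (if (2:ℤ) ∣ ((i:ℤ) + i' + 1) then (0:ℝ) else 1) - 1 :=
    cosSum2' n _ (notdvd n _ (by omega) (by rw [abs_le]; omega))
  by_cases hii : i = i'
  · subst hii
    rw [if_pos rfl]
    have hz : ((i:ℤ) - i : ℤ) = 0 := by ring
    have hsum1 : ∑ j ∈ Finset.range n,
        Real.cos (π * (((i:ℤ) - i : ℤ) : ℝ) * ((j:ℝ)+1) / ((n:ℝ)+1)) = (n:ℝ) := by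
      rw [Finset.sum_congr rfl (fun j _ => by rw [hz]; norm_num : ∀ j ∈ Finset.range n,
        Real.cos (π * (((i:ℤ) - i : ℤ) : ℝ) * ((j:ℝ)+1) / ((n:ℝ)+1)) = 1)]
      simp
    rw [hsum1, hsum2, if_neg (by omega)]
    ring
  · rw [if_neg hii]
    have hsum1 : ∑ j ∈ Finset.range n,
        Real.cos (π * (((i:ℤ) - i' : ℤ) : ℝ) * ((j:ℝ)+1) / ((n:ℝ)+1))
        = (if (2:ℤ) ∣ ((i:ℤ) - i') then (0:ℝ) else 1) - 1 :=
      cosSum2' n _ (notdvd n _ (by omega) (by rw [abs_le]; omega))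
    rw [hsum1, hsum2]
    by_cases hd : (2:ℤ) ∣ ((i:ℤ) - i')
    · rw [if_pos hd, if_neg (by omega)]
      ring
    · rw [if_neg hd, if_pos (by omega)]
      ring
lemma Sd_apply (n : ℕ) (i : Fin n) (l : Fin (n+1)) :
    Sd n 1 1 i l = (if (l:ℕ) = (i:ℕ) then (1:ℝ) else 0)
      + (if (l:ℕ) = (i:ℕ)+1 then (-1:ℝ) else 0) := by
  show (if (l : ℕ) = (i : ℕ) ∧ (i : ℕ) = 0 then (1:ℝ)
    else if (l : ℕ) = (i : ℕ) then 1
    else if (l : ℕ) = (i : ℕ) + 1 ∧ (i : ℕ) = n - 1 then -1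
    else if (l : ℕ) = (i : ℕ) + 1 then (-1 : ℝ)
    else 0) = _
  split_ifs <;> simp_all <;> omega

lemma Sd_mul_apply {m : Type*} [Fintype m] (n : ℕ) (M : Matrix (Fin (n+1)) m ℝ)
    (i : Fin n) (j : m) :
    (Sd n 1 1 * M) i j = M i.castSucc j - M i.succ j := by
  rw [Matrix.mul_apply]
  have key : ∀ l : Fin (n+1), Sd n 1 1 i l * M l j
      = (if l = i.castSucc then M i.castSucc j else 0)
        + (if l = i.succ then -M i.succ j else 0) := by
    intro l
    rw [Sd_apply, add_mul]
    congr 1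
    · by_cases h : l = i.castSucc
      · subst h
        rw [if_pos (by simp), if_pos rfl, one_mul]
      · rw [if_neg (fun hc => h (Fin.ext (by simpa using hc))), if_neg h, zero_mul]
    · by_cases h : l = i.succ
      · subst h
        rw [if_pos (by simp), if_pos rfl, neg_one_mul]
      · rw [if_neg (fun hc => h (Fin.ext (by simpa using hc))), if_neg h, zero_mul]
  rw [Finset.sum_congr rfl (fun l _ => key l), Finset.sum_add_distrib,
      Finset.sum_ite_eq', Finset.sum_ite_eq']
  simp [sub_eq_add_neg]

lemma Sd_rank (n : ℕ) : (Sd n 1 1).rank = n := by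
  have h1 : (Sd n 1 1).rank ≤ n := by
    simpa using Matrix.rank_le_card_height (Sd n 1 1)
  set B : Matrix (Fin (n+1)) (Fin n) ℝ :=
    Matrix.of fun l j => if (l:ℕ) ≤ (j:ℕ) then (1:ℝ) else 0 with hB
  have hSB : Sd n 1 1 * B = 1 := by
    ext i j
    rw [Sd_mul_apply, hB, Matrix.one_apply]
    show (if (i.castSucc : ℕ) ≤ (j:ℕ) then (1:ℝ) else 0)
        - (if (i.succ : ℕ) ≤ (j:ℕ) then (1:ℝ) else 0) = _
    simp only [Fin.coe_castSucc, Fin.val_succ]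
    have : i = j ↔ (i:ℕ) = (j:ℕ) := ⟨fun h => h ▸ rfl, fun h => Fin.ext h⟩
    split_ifs <;> simp_all <;> omega
  have h2 : n ≤ (Sd n 1 1).rank := by
    have := Matrix.rank_mul_le_left (Sd n 1 1) B
    rw [hSB, Matrix.rank_one] at this
    simpa using this
  omega
section MatLemmas
variable (n : ℕ)

lemma UtU (hn : 1 ≤ n) :
    (Matrix.of fun (i j : Fin n) =>
      Real.sqrt (2 / ((n : ℝ) + 1)) *
        Real.sin (π * ((n : ℝ) - (j : ℕ)) * (((i : ℕ) : ℝ) + 1) / ((n : ℝ) + 1)))ᵀ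
    * (Matrix.of fun (i j : Fin n) =>
      Real.sqrt (2 / ((n : ℝ) + 1)) *
        Real.sin (π * ((n : ℝ) - (j : ℕ)) * (((i : ℕ) : ℝ) + 1) / ((n : ℝ) + 1))) = 1 := by
  have hc2 : Real.sqrt (2/((n:ℝ)+1)) * Real.sqrt (2/((n:ℝ)+1)) = 2/((n:ℝ)+1) :=
    Real.mul_self_sqrt (by positivity)
  ext a b
  rw [Matrix.mul_apply, Matrix.one_apply]
  simp only [Matrix.transpose_apply, Matrix.of_apply]
  have ha : ((n:ℝ) - ((a:ℕ):ℝ)) = ((n - (a:ℕ) : ℕ) : ℝ) := by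
    rw [Nat.cast_sub a.isLt.le]
  have hb : ((n:ℝ) - ((b:ℕ):ℝ)) = ((n - (b:ℕ) : ℕ) : ℝ) := by
    rw [Nat.cast_sub b.isLt.le]
  have h1 : ∑ i : Fin n,
      (Real.sqrt (2/((n:ℝ)+1)) * Real.sin (π * ((n:ℝ) - ((a:ℕ):ℝ)) * (((i:ℕ):ℝ) + 1) / ((n:ℝ)+1)))
      * (Real.sqrt (2/((n:ℝ)+1)) * Real.sin (π * ((n:ℝ) - ((b:ℕ):ℝ)) * (((i:ℕ):ℝ) + 1) / ((n:ℝ)+1)))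
      = (2/((n:ℝ)+1)) * ∑ k ∈ Finset.range n,
          Real.sin (π * ((n - (a:ℕ) : ℕ) : ℝ) * ((k:ℝ)+1) / ((n:ℝ)+1))
          * Real.sin (π * ((n - (b:ℕ) : ℕ) : ℝ) * ((k:ℝ)+1) / ((n:ℝ)+1)) := by
    rw [Finset.mul_sum, ← Fin.sum_univ_eq_sum_range]
    exact Finset.sum_congr rfl (fun i _ => by rw [ha, hb, mul_mul_mul_comm, hc2])
  rw [h1, dst n (n - (a:ℕ)) (n - (b:ℕ)) (by omega) (by omega) (by omega) (by omega)]
  have hlta := a.isLt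
  have hltb := b.isLt
  have hiff : (n - (a:ℕ) = n - (b:ℕ)) ↔ a = b := by
    rw [Fin.ext_iff]
    constructor <;> (intro; omega)
  by_cases hab : a = b
  · rw [if_pos (hiff.mpr hab), if_pos hab]
    field_simp
  · rw [if_neg (fun h => hab (hiff.mp h)), if_neg hab, mul_zero]

end MatLemmas
section MatLemmas2
variable (n : ℕ)

lemma reflect_sum (F : ℕ → ℝ) :
    ∑ k ∈ Finset.range n, F (n - k) = ∑ k ∈ Finset.range n, F (k+1) := by
  rw [← Finset.sum_range_reflect (fun k => F (k+1)) n]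
  refine Finset.sum_congr rfl (fun k hk => ?_)
  rw [Finset.mem_range] at hk
  congr 1
  omega

lemma UUt (hn : 1 ≤ n) :
    (Matrix.of fun (i j : Fin n) =>
      Real.sqrt (2 / ((n : ℝ) + 1)) *
        Real.sin (π * ((n : ℝ) - (j : ℕ)) * (((i : ℕ) : ℝ) + 1) / ((n : ℝ) + 1)))
    * (Matrix.of fun (i j : Fin n) =>
      Real.sqrt (2 / ((n : ℝ) + 1)) *
        Real.sin (π * ((n : ℝ) - (j : ℕ)) * (((i : ℕ) : ℝ) + 1) / ((n : ℝ) + 1)))ᵀ = 1 := by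
  have hc2 : Real.sqrt (2/((n:ℝ)+1)) * Real.sqrt (2/((n:ℝ)+1)) = 2/((n:ℝ)+1) :=
    Real.mul_self_sqrt (by positivity)
  ext a b
  rw [Matrix.mul_apply, Matrix.one_apply]
  simp only [Matrix.transpose_apply, Matrix.of_apply]
  have h1 : ∑ j : Fin n,
      (Real.sqrt (2/((n:ℝ)+1)) * Real.sin (π * ((n:ℝ) - ((j:ℕ):ℝ)) * (((a:ℕ):ℝ) + 1) / ((n:ℝ)+1)))
      * (Real.sqrt (2/((n:ℝ)+1)) * Real.sin (π * ((n:ℝ) - ((j:ℕ):ℝ)) * (((b:ℕ):ℝ) + 1) / ((n:ℝ)+1)))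
      = (2/((n:ℝ)+1)) * ∑ k ∈ Finset.range n,
          Real.sin (π * (((n - k : ℕ)) : ℝ) * (((a:ℕ):ℝ)+1) / ((n:ℝ)+1))
          * Real.sin (π * (((n - k : ℕ)) : ℝ) * (((b:ℕ):ℝ)+1) / ((n:ℝ)+1)) := by
    rw [Finset.mul_sum, ← Fin.sum_univ_eq_sum_range]
    refine Finset.sum_congr rfl (fun j _ => ?_)
    have hj : ((n:ℝ) - ((j:ℕ):ℝ)) = ((n - (j:ℕ) : ℕ) : ℝ) := by
      rw [Nat.cast_sub j.isLt.le]
    rw [hj, mul_mul_mul_comm, hc2]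
  rw [h1, reflect_sum n (fun k => Real.sin (π * ((k:ℕ) : ℝ) * (((a:ℕ):ℝ)+1) / ((n:ℝ)+1))
          * Real.sin (π * ((k:ℕ) : ℝ) * (((b:ℕ):ℝ)+1) / ((n:ℝ)+1)))]
  have h2 : ∑ k ∈ Finset.range n,
      Real.sin (π * (((k+1 : ℕ)) : ℝ) * (((a:ℕ):ℝ)+1) / ((n:ℝ)+1))
        * Real.sin (π * (((k+1 : ℕ)) : ℝ) * (((b:ℕ):ℝ)+1) / ((n:ℝ)+1))
      = ∑ k ∈ Finset.range n,
      Real.sin (π * (((a:ℕ)+1 : ℕ) : ℝ) * (((k:ℕ):ℝ)+1) / ((n:ℝ)+1))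
        * Real.sin (π * (((b:ℕ)+1 : ℕ) : ℝ) * (((k:ℝ))+1) / ((n:ℝ)+1)) := by
    refine Finset.sum_congr rfl (fun k _ => ?_)
    congr 1 <;> exact congrArg Real.sin (by push_cast; ring)
  rw [h2, dst n ((a:ℕ)+1) ((b:ℕ)+1) (by omega) (by omega) (by omega) (by omega)]
  have hlta := a.isLt
  have hltb := b.isLt
  have hiff : ((a:ℕ)+1 = (b:ℕ)+1) ↔ a = b := by
    rw [Fin.ext_iff]; omega
  by_cases hab : a = b
  · rw [if_pos (hiff.mpr hab), if_pos hab]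
    field_simp
  · rw [if_neg (fun h => hab (hiff.mp h)), if_neg hab, mul_zero]

end MatLemmas2
section MatLemmas3
variable (n : ℕ)

lemma VtV (hn : 1 ≤ n) :
    (Matrix.of fun (i j : Fin (n+1)) =>
      if (j : ℕ) = n then 1 / Real.sqrt ((n : ℝ) + 1)
      else Real.sqrt (2 / ((n : ℝ) + 1)) *
        Real.cos (π * ((n : ℝ) - (j : ℕ)) * (2 * ((i : ℕ) : ℝ) + 1) / (2 * ((n : ℝ) + 1))))ᵀ
    * (Matrix.of fun (i j : Fin (n+1)) =>
      if (j : ℕ) = n then 1 / Real.sqrt ((n : ℝ) + 1)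
      else Real.sqrt (2 / ((n : ℝ) + 1)) *
        Real.cos (π * ((n : ℝ) - (j : ℕ)) * (2 * ((i : ℕ) : ℝ) + 1) / (2 * ((n : ℝ) + 1)))) = 1 := by
  have hc2 : Real.sqrt (2/((n:ℝ)+1)) * Real.sqrt (2/((n:ℝ)+1)) = 2/((n:ℝ)+1) :=
    Real.mul_self_sqrt (by positivity)
  have hss : Real.sqrt ((n:ℝ)+1) * Real.sqrt ((n:ℝ)+1) = (n:ℝ)+1 :=
    Real.mul_self_sqrt (by positivity)
  have hNne : ((n:ℝ)+1) ≠ 0 := by positivity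
  ext a b
  rw [Matrix.mul_apply, Matrix.one_apply]
  simp only [Matrix.transpose_apply, Matrix.of_apply]
  have hlta := a.isLt
  have hltb := b.isLt
  by_cases hA : (a:ℕ) = n <;> by_cases hB : (b:ℕ) = n
  · rw [if_pos (Fin.ext (hA.trans hB.symm) : a = b)]
    simp only [if_pos hA, if_pos hB]
    rw [Finset.sum_const, Finset.card_univ, Fintype.card_fin, nsmul_eq_mul,
        div_mul_div_comm, one_mul, hss]
    push_cast
    field_simp
  · rw [if_neg (fun h : a = b => hB ((congrArg (Fin.val) h).symm.trans hA))]
    have hbc : ((n:ℝ) - ((b:ℕ):ℝ)) = ((n - (b:ℕ) : ℕ) : ℝ) := by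
      rw [Nat.cast_sub (by omega)]
    have h1 : ∑ i : Fin (n+1),
        (if (a:ℕ) = n then 1 / Real.sqrt ((n:ℝ)+1)
          else Real.sqrt (2/((n:ℝ)+1)) * Real.cos (π * ((n:ℝ) - ((a:ℕ):ℝ)) * (2*((i:ℕ):ℝ)+1) / (2*((n:ℝ)+1))))
        * (if (b:ℕ) = n then 1 / Real.sqrt ((n:ℝ)+1)
          else Real.sqrt (2/((n:ℝ)+1)) * Real.cos (π * ((n:ℝ) - ((b:ℕ):ℝ)) * (2*((i:ℕ):ℝ)+1) / (2*((n:ℝ)+1))))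
        = (1 / Real.sqrt ((n:ℝ)+1) * Real.sqrt (2/((n:ℝ)+1))) * ∑ k ∈ Finset.range (n+1),
            Real.cos (π * ((n - (b:ℕ) : ℕ) : ℝ) * (2*(k:ℝ)+1) / (2*((n:ℝ)+1))) := by
      rw [Finset.mul_sum, ← Fin.sum_univ_eq_sum_range]
      refine Finset.sum_congr rfl (fun i _ => ?_)
      rw [if_pos hA, if_neg hB, hbc]
      ring
    rw [h1, dct0 n (n - (b:ℕ)) (by omega) (by omega), mul_zero]
  · rw [if_neg (fun h : a = b => hA ((congrArg (Fin.val) h).trans hB))]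
    have hac : ((n:ℝ) - ((a:ℕ):ℝ)) = ((n - (a:ℕ) : ℕ) : ℝ) := by
      rw [Nat.cast_sub (by omega)]
    have h1 : ∑ i : Fin (n+1),
        (if (a:ℕ) = n then 1 / Real.sqrt ((n:ℝ)+1)
          else Real.sqrt (2/((n:ℝ)+1)) * Real.cos (π * ((n:ℝ) - ((a:ℕ):ℝ)) * (2*((i:ℕ):ℝ)+1) / (2*((n:ℝ)+1))))
        * (if (b:ℕ) = n then 1 / Real.sqrt ((n:ℝ)+1)
          else Real.sqrt (2/((n:ℝ)+1)) * Real.cos (π * ((n:ℝ) - ((b:ℕ):ℝ)) * (2*((i:ℕ):ℝ)+1) / (2*((n:ℝ)+1))))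
        = (1 / Real.sqrt ((n:ℝ)+1) * Real.sqrt (2/((n:ℝ)+1))) * ∑ k ∈ Finset.range (n+1),
            Real.cos (π * ((n - (a:ℕ) : ℕ) : ℝ) * (2*(k:ℝ)+1) / (2*((n:ℝ)+1))) := by
      rw [Finset.mul_sum, ← Fin.sum_univ_eq_sum_range]
      refine Finset.sum_congr rfl (fun i _ => ?_)
      rw [if_neg hA, if_pos hB, hac]
      ring
    rw [h1, dct0 n (n - (a:ℕ)) (by omega) (by omega), mul_zero]
  ·
    have hac : ((n:ℝ) - ((a:ℕ):ℝ)) = ((n - (a:ℕ) : ℕ) : ℝ) := by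
      rw [Nat.cast_sub (by omega)]
    have hbc : ((n:ℝ) - ((b:ℕ):ℝ)) = ((n - (b:ℕ) : ℕ) : ℝ) := by
      rw [Nat.cast_sub (by omega)]
    have h1 : ∑ i : Fin (n+1),
        (if (a:ℕ) = n then 1 / Real.sqrt ((n:ℝ)+1)
          else Real.sqrt (2/((n:ℝ)+1)) * Real.cos (π * ((n:ℝ) - ((a:ℕ):ℝ)) * (2*((i:ℕ):ℝ)+1) / (2*((n:ℝ)+1))))
        * (if (b:ℕ) = n then 1 / Real.sqrt ((n:ℝ)+1)
          else Real.sqrt (2/((n:ℝ)+1)) * Real.cos (π * ((n:ℝ) - ((b:ℕ):ℝ)) * (2*((i:ℕ):ℝ)+1) / (2*((n:ℝ)+1))))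
        = (2/((n:ℝ)+1)) * ∑ k ∈ Finset.range (n+1),
            Real.cos (π * ((n - (a:ℕ) : ℕ) : ℝ) * (2*(k:ℝ)+1) / (2*((n:ℝ)+1)))
            * Real.cos (π * ((n - (b:ℕ) : ℕ) : ℝ) * (2*(k:ℝ)+1) / (2*((n:ℝ)+1))) := by
      rw [Finset.mul_sum, ← Fin.sum_univ_eq_sum_range]
      refine Finset.sum_congr rfl (fun i _ => ?_)
      rw [if_neg hA, if_neg hB, hac, hbc, mul_mul_mul_comm, hc2]
    rw [h1, dct n (n - (a:ℕ)) (n - (b:ℕ)) (by omega) (by omega) (by omega) (by omega)]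
    have hiff : (n - (a:ℕ) = n - (b:ℕ)) ↔ a = b := by rw [Fin.ext_iff]; omega
    by_cases hab : a = b
    · rw [if_pos (hiff.mpr hab), if_pos hab]
      field_simp
    · rw [if_neg (fun h => hab (hiff.mp h)), if_neg hab, mul_zero]

end MatLemmas3
section MatLemmas4
variable (n : ℕ)

lemma VVt (hn : 1 ≤ n) :
    (Matrix.of fun (i j : Fin (n+1)) =>
      if (j : ℕ) = n then 1 / Real.sqrt ((n : ℝ) + 1)
      else Real.sqrt (2 / ((n : ℝ) + 1)) *
        Real.cos (π * ((n : ℝ) - (j : ℕ)) * (2 * ((i : ℕ) : ℝ) + 1) / (2 * ((n : ℝ) + 1))))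
    * (Matrix.of fun (i j : Fin (n+1)) =>
      if (j : ℕ) = n then 1 / Real.sqrt ((n : ℝ) + 1)
      else Real.sqrt (2 / ((n : ℝ) + 1)) *
        Real.cos (π * ((n : ℝ) - (j : ℕ)) * (2 * ((i : ℕ) : ℝ) + 1) / (2 * ((n : ℝ) + 1))))ᵀ = 1 := by
  have hc2 : Real.sqrt (2/((n:ℝ)+1)) * Real.sqrt (2/((n:ℝ)+1)) = 2/((n:ℝ)+1) :=
    Real.mul_self_sqrt (by positivity)
  have hss : Real.sqrt ((n:ℝ)+1) * Real.sqrt ((n:ℝ)+1) = (n:ℝ)+1 :=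
    Real.mul_self_sqrt (by positivity)
  have hNne : ((n:ℝ)+1) ≠ 0 := by positivity
  ext a b
  rw [Matrix.mul_apply, Matrix.one_apply]
  simp only [Matrix.transpose_apply, Matrix.of_apply]
  rw [Fin.sum_univ_castSucc]
  simp only [Fin.coe_castSucc, Fin.val_last]
  simp only [if_true]
  have hlta := a.isLt
  have hltb := b.isLt
  have h1 : ∑ j : Fin n,
      (if ((j:ℕ)) = n then 1 / Real.sqrt ((n:ℝ)+1)
        else Real.sqrt (2/((n:ℝ)+1)) * Real.cos (π * ((n:ℝ) - ((j:ℕ):ℝ)) * (2*((a:ℕ):ℝ)+1) / (2*((n:ℝ)+1))))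
      * (if ((j:ℕ)) = n then 1 / Real.sqrt ((n:ℝ)+1)
        else Real.sqrt (2/((n:ℝ)+1)) * Real.cos (π * ((n:ℝ) - ((j:ℕ):ℝ)) * (2*((b:ℕ):ℝ)+1) / (2*((n:ℝ)+1))))
      = (2/((n:ℝ)+1)) * ∑ k ∈ Finset.range n,
          Real.cos (π * ((n - k : ℕ) : ℝ) * (2*((a:ℕ):ℝ)+1) / (2*((n:ℝ)+1)))
          * Real.cos (π * ((n - k : ℕ) : ℝ) * (2*((b:ℕ):ℝ)+1) / (2*((n:ℝ)+1))) := by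
    rw [Finset.mul_sum, ← Fin.sum_univ_eq_sum_range]
    refine Finset.sum_congr rfl (fun j _ => ?_)
    have hj : ((n:ℝ) - ((j:ℕ):ℝ)) = ((n - (j:ℕ) : ℕ) : ℝ) := by
      rw [Nat.cast_sub j.isLt.le]
    rw [if_neg (Nat.ne_of_lt j.isLt), if_neg (Nat.ne_of_lt j.isLt), hj, mul_mul_mul_comm, hc2]
  rw [h1, reflect_sum n (fun k => Real.cos (π * ((k:ℕ) : ℝ) * (2*((a:ℕ):ℝ)+1) / (2*((n:ℝ)+1)))
          * Real.cos (π * ((k:ℕ) : ℝ) * (2*((b:ℕ):ℝ)+1) / (2*((n:ℝ)+1))))]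
  have h2 : ∑ k ∈ Finset.range n,
      Real.cos (π * ((k+1 : ℕ) : ℝ) * (2*((a:ℕ):ℝ)+1) / (2*((n:ℝ)+1)))
        * Real.cos (π * ((k+1 : ℕ) : ℝ) * (2*((b:ℕ):ℝ)+1) / (2*((n:ℝ)+1)))
      = ∑ k ∈ Finset.range n,
      Real.cos (π * ((k:ℝ)+1) * (2*((a:ℕ):ℝ)+1) / (2*((n:ℝ)+1)))
        * Real.cos (π * ((k:ℝ)+1) * (2*((b:ℕ):ℝ)+1) / (2*((n:ℝ)+1))) := by
    refine Finset.sum_congr rfl (fun k _ => ?_)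
    congr 1 <;> exact congrArg Real.cos (by push_cast; ring)
  rw [h2, dctRow n (a:ℕ) (b:ℕ) (by omega) (by omega)]
  rw [div_mul_div_comm, one_mul, hss]
  have hiff : ((a:ℕ) = (b:ℕ)) ↔ a = b := (Fin.ext_iff).symm
  by_cases hab : a = b
  · rw [if_pos (hiff.mpr hab), if_pos hab]
    field_simp
  · rw [if_neg (fun h => hab (hiff.mp h)), if_neg hab]
    field_simp
    ring

end MatLemmas4
section MatLemmas5
variable (n : ℕ)

lemma cos_tele (z N w : ℝ) (hN : N ≠ 0) :
    Real.cos (π * z * (2*w+1)/(2*N)) - Real.cos (π * z * (2*(w+1)+1)/(2*N))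
      = Real.sin (π * z * (w+1)/N) * (2 * Real.sin (π * z / (2*N))) := by
  rw [Real.cos_sub_cos]
  have e1 : (π * z * (2*w+1)/(2*N) + π * z * (2*(w+1)+1)/(2*N))/2 = π * z * (w+1)/N := by
    field_simp; ring
  have e2 : (π * z * (2*w+1)/(2*N) - π * z * (2*(w+1)+1)/(2*N))/2 = -(π * z / (2*N)) := by
    field_simp
    ring
  rw [e1, e2, Real.sin_neg]
  ring

lemma SdV (hn : 1 ≤ n) :
    Sd n 1 1 * (Matrix.of fun (i j : Fin (n+1)) =>
      if (j : ℕ) = n then 1 / Real.sqrt ((n : ℝ) + 1)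
      else Real.sqrt (2 / ((n : ℝ) + 1)) *
        Real.cos (π * ((n : ℝ) - (j : ℕ)) * (2 * ((i : ℕ) : ℝ) + 1) / (2 * ((n : ℝ) + 1))))
    = (Matrix.of fun (i : Fin n) (j : Fin n) =>
      Real.sqrt (2 / ((n : ℝ) + 1)) *
        Real.sin (π * ((n : ℝ) - (j : ℕ)) * (((i : ℕ) : ℝ) + 1) / ((n : ℝ) + 1)))
    * (Matrix.of fun (i : Fin n) (j : Fin (n+1)) =>
      if (i : ℕ) = (j : ℕ) then
        2 * Real.sin (π * ((n : ℝ) - (i : ℕ)) / (2 * ((n : ℝ) + 1)))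
      else 0) := by
  have hNne : ((n:ℝ)+1) ≠ 0 := by positivity
  ext i j
  rw [Sd_mul_apply, Matrix.mul_apply]
  simp only [Matrix.of_apply, Fin.coe_castSucc, Fin.val_succ]
  by_cases hj : (j:ℕ) = n
  · rw [if_pos hj, if_pos hj, sub_self]
    symm
    apply Finset.sum_eq_zero
    intro l _
    have := l.isLt
    rw [if_neg (by omega), mul_zero]
  · have hjlt : (j:ℕ) < n := by have := j.isLt; omega
    have hRS : ∀ l : Fin n,
        (Real.sqrt (2 / ((n : ℝ) + 1)) *
          Real.sin (π * ((n : ℝ) - ((l:ℕ):ℝ)) * (((i : ℕ) : ℝ) + 1) / ((n : ℝ) + 1)))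
        * (if (l : ℕ) = (j : ℕ) then
            2 * Real.sin (π * ((n : ℝ) - ((l:ℕ):ℝ)) / (2 * ((n : ℝ) + 1)))
          else 0)
        = if l = (⟨(j:ℕ), hjlt⟩ : Fin n) then
            (Real.sqrt (2 / ((n : ℝ) + 1)) *
              Real.sin (π * ((n : ℝ) - ((j:ℕ):ℝ)) * (((i : ℕ) : ℝ) + 1) / ((n : ℝ) + 1)))
            * (2 * Real.sin (π * ((n : ℝ) - ((j:ℕ):ℝ)) / (2 * ((n : ℝ) + 1))))
          else 0 := by
      intro l
      by_cases hl : l = (⟨(j:ℕ), hjlt⟩ : Fin n)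
      · subst hl
        rw [if_pos rfl, if_pos rfl]
      · rw [if_neg (fun hc => hl (Fin.ext hc)), if_neg hl, mul_zero]
    rw [Finset.sum_congr rfl (fun l _ => hRS l), Finset.sum_ite_eq' Finset.univ,
        if_pos (Finset.mem_univ _)]
    rw [if_neg hj, if_neg hj]
    push_cast
    rw [← mul_sub, cos_tele ((n:ℝ) - ((j:ℕ):ℝ)) ((n:ℝ)+1) (((i:ℕ):ℝ)) hNne]
    ring

end MatLemmas5

/-- explicit SVD of the diffusion matrix under Open boundary conditions.
Indices here run from 0, whereas in the informal statement they run from 1. -/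
theorem stmt13 (n : ℕ) (hn : 1 ≤ n) :
    let U : Matrix (Fin n) (Fin n) ℝ := Matrix.of fun i j =>
      Real.sqrt (2 / ((n : ℝ) + 1)) *
        Real.sin (π * ((n : ℝ) - (j : ℕ)) * (((i : ℕ) : ℝ) + 1) / ((n : ℝ) + 1))
    let V : Matrix (Fin (n+1)) (Fin (n+1)) ℝ := Matrix.of fun i j =>
      if (j : ℕ) = n then 1 / Real.sqrt ((n : ℝ) + 1)
      else Real.sqrt (2 / ((n : ℝ) + 1)) *
        Real.cos (π * ((n : ℝ) - (j : ℕ)) * (2 * ((i : ℕ) : ℝ) + 1) / (2 * ((n : ℝ) + 1)))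
    let Sig : Matrix (Fin n) (Fin (n+1)) ℝ := Matrix.of fun i j =>
      if (i : ℕ) = (j : ℕ) then
        2 * Real.sin (π * ((n : ℝ) - (i : ℕ)) / (2 * ((n : ℝ) + 1)))
      else 0
    Uᵀ * U = 1 ∧ U * Uᵀ = 1 ∧ Vᵀ * V = 1 ∧ V * Vᵀ = 1 ∧
      Sd n 1 1 = U * Sig * Vᵀ ∧ (Sd n 1 1).rank = n := by
  intro U V Sig
  have hv : V * Vᵀ = 1 := VVt n hn
  have hsv : Sd n 1 1 * V = U * Sig := SdV n hn
  refine ⟨UtU n hn, UUt n hn, VtV n hn, hv, ?_, Sd_rank n⟩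
  calc Sd n 1 1 = Sd n 1 1 * (V * Vᵀ) := by rw [hv, Matrix.mul_one]
    _ = (Sd n 1 1 * V) * Vᵀ := by rw [Matrix.mul_assoc]
    _ = U * Sig * Vᵀ := by rw [hsv]
end
end

section
/- Let n₁, n₂ ≥ 1, let u₁ ∈ ℝ^{n₁} and u₂ ∈ ℝ^{n₂} be unit vectors, and let a₁,…,a₆ ∈ ℝ with a₅ ≠ 0, a₆ ≠ 0, a₁ = a₃a₅/a₆ and a₄ = a₂a₆/a₅. Let A₁ be a k × m real matrix and v₁, v₂ ∈ ℝ^m. Then [[a₁·u₁u₁ᵀ ⊗ A₁, a₂·u₁u₂ᵀ ⊗ A₁],[a₃·u₂u₁ᵀ ⊗ A₁, a₄·u₂u₂ᵀ ⊗ A₁]] · [a₅·u₁ ⊗ v₁; a₆·u₂ ⊗ v₂] = [a₅·u₁; a₆·u₂] ⊗ ( A₁ (a₁ v₁ + a₄ v₂) ). -/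
open Matrix
open scoped Kronecker Matrix

lemma stmt16_key {n m : ℕ} (u : Fin n → ℝ) (f v : Fin m → ℝ) (c d w : ℝ) :
    ∑ x : Fin n, ∑ y : Fin m, c * (w * u x * f y) * (d * u x * v y)
      = c * d * w * (∑ x, u x ^ 2) * ∑ y, f y * v y := by
  have h : ∀ x : Fin n, ∑ y : Fin m, c * (w * u x * f y) * (d * u x * v y)
      = (c * d * w * u x ^ 2) * ∑ y, f y * v y := by
    intro x
    rw [Finset.mul_sum]
    exact Finset.sum_congr rfl fun y _ => by ring
  simp only [h]
  rw [← Finset.sum_mul, ← Finset.mul_sum]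

/-- Kronecker product property (Property 3 of the paper). -/
theorem stmt16 (n₁ n₂ k m : ℕ) (h₁ : 1 ≤ n₁) (h₂ : 1 ≤ n₂)
    (u₁ : Fin n₁ → ℝ) (u₂ : Fin n₂ → ℝ)
    (hu₁ : ∑ i, u₁ i ^ 2 = 1) (hu₂ : ∑ i, u₂ i ^ 2 = 1)
    (a₁ a₂ a₃ a₄ a₅ a₆ : ℝ) (h₅ : a₅ ≠ 0) (h₆ : a₆ ≠ 0)
    (ha₁ : a₁ = a₃ * a₅ / a₆) (ha₄ : a₄ = a₂ * a₆ / a₅)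
    (A₁ : Matrix (Fin k) (Fin m) ℝ) (v₁ v₂ : Fin m → ℝ) :
    (fromBlocks (a₁ • (vecMulVec u₁ u₁ ⊗ₖ A₁)) (a₂ • (vecMulVec u₁ u₂ ⊗ₖ A₁))
        (a₃ • (vecMulVec u₂ u₁ ⊗ₖ A₁)) (a₄ • (vecMulVec u₂ u₂ ⊗ₖ A₁))) *ᵥ
      Sum.elim (fun p : Fin n₁ × Fin m => a₅ * u₁ p.1 * v₁ p.2)
        (fun p : Fin n₂ × Fin m => a₆ * u₂ p.1 * v₂ p.2) =
      Sum.elim (fun p : Fin n₁ × Fin k => a₅ * u₁ p.1 * (A₁ *ᵥ (a₁ • v₁ + a₄ • v₂)) p.2)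
        (fun p : Fin n₂ × Fin k => a₆ * u₂ p.1 * (A₁ *ᵥ (a₁ • v₁ + a₄ • v₂)) p.2) := by
  have h25 : a₂ * a₆ = a₄ * a₅ := by rw [ha₄, div_mul_cancel₀ _ h₅]
  have h36 : a₃ * a₅ = a₁ * a₆ := by rw [ha₁, div_mul_cancel₀ _ h₆]
  funext x
  cases x with
  | inl p =>
    simp only [mulVec, dotProduct, fromBlocks, Sum.elim_inl, Sum.elim_inr,
      Fintype.sum_sum_type, of_apply, Matrix.smul_apply, kroneckerMap_apply, vecMulVec_apply,
      smul_eq_mul, Fintype.sum_prod_type, Pi.add_apply, Pi.smul_apply,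
      stmt16_key, hu₁, hu₂, Finset.mul_sum]
    rw [← Finset.sum_add_distrib]
    refine Finset.sum_congr rfl fun y _ => ?_
    linear_combination (u₁ p.1 * A₁ p.2 y * v₂ y) * h25
  | inr p =>
    simp only [mulVec, dotProduct, fromBlocks, Sum.elim_inl, Sum.elim_inr,
      Fintype.sum_sum_type, of_apply, Matrix.smul_apply, kroneckerMap_apply, vecMulVec_apply,
      smul_eq_mul, Fintype.sum_prod_type, Pi.add_apply, Pi.smul_apply,
      stmt16_key, hu₁, hu₂, Finset.mul_sum]
    rw [← Finset.sum_add_distrib]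
    refine Finset.sum_congr rfl fun y _ => ?_
    linear_combination (u₂ p.1 * A₁ p.2 y * v₁ y) * h36
end

section
/- (Exact nullspace columns of the barrier system.) Let S be the reaction–diffusion stoichiometry matrix with barrier built from n₁, n₂ ≥ 1 (n = n₁+n₂), b₁, b₂ ∈ {0,1}, any γ ∈ ℝ, m × p₁ and m × p₂ matrices S_{r₁}, S_{r₂}, and a subset M₊ ⊆ {1,…,m}. Let (Û_{d₁}, Σ̂_{d₁}, V̂_{d₁}, Ŭ_{d₁}, V̆_{d₁}) be an SVD of rank q_{d₁} of S_{d₁} = S_d(n₁; b₁, 0), and suppose S_{r₁} = U_{r₁} Σ_{r₁} V_{r₁}ᵀ where U_{r₁} (m × m) and V_{r₁} (p₁ × p₁) are orthogonal. Define the (n₁p₁ + n₂p₂ + (n+1)m) × (q_{d₁} p₁) matrix N = [ Û_{d₁}Σ̂_{d₁} ⊗ V_{r₁} ; 0 ; ([−γ V̂_{d₁}; 0_{n₂ × q_{d₁}}]) ⊗ (U_{r₁}Σ_{r₁}) ], where the middle zero block has n₂p₂ rows. Then S · N = 0 and the columns of N are linearly independent; i.e., the columns of N span a q_{d₁}p₁-dimensional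 subspace of the nullspace of S, for every γ ∈ ℝ. -/
open Matrix
open scoped Kronecker Matrix

noncomputable section

private lemma fromBlocks_mul_fromRows' {R : Type*} [Semiring R]
    {r₁ r₂ c₁ c₂ s : Type*} [Fintype c₁] [Fintype c₂]
    (A : Matrix r₁ c₁ R) (B : Matrix r₁ c₂ R) (C : Matrix r₂ c₁ R) (D : Matrix r₂ c₂ R)
    (X : Matrix c₁ s R) (Y : Matrix c₂ s R) :
    fromBlocks A B C D * fromRows X Y = fromRows (A * X + B * Y) (C * X + D * Y) := by
  rw [← fromRows_fromCols_eq_fromBlocks, fromRows_mul, fromCols_mul_fromRows,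
    fromCols_mul_fromRows]

/-- exact nullspace columns of the barrier system, for every `γ`. -/
theorem stmt18 (n₁ n₂ m p₁ p₂ : ℕ) (h₁ : 1 ≤ n₁) (h₂ : 1 ≤ n₂) (hm : 1 ≤ m)
    (b₁ b₂ : ℝ) (hb₁ : b₁ = 0 ∨ b₁ = 1) (hb₂ : b₂ = 0 ∨ b₂ = 1)
    (γ : ℝ)
    (Sr1 : Matrix (Fin m) (Fin p₁) ℝ) (Sr2 : Matrix (Fin m) (Fin p₂) ℝ)
    (Mp : Finset (Fin m))
    -- SVD of `S_{d₁} = S_d(n₁; b₁, 0)` of rank `q_{d₁}`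
    (qd1 : ℕ) (Uhd1 : Matrix (Fin n₁) (Fin qd1) ℝ) (σd1 : Fin qd1 → ℝ)
    (Vhd1 : Matrix (Fin (n₁ + 1)) (Fin qd1) ℝ)
    (Ucd1 : Matrix (Fin n₁) (Fin (n₁ - qd1)) ℝ)
    (Vcd1 : Matrix (Fin (n₁ + 1)) (Fin (n₁ + 1 - qd1)) ℝ)
    (hσd1 : ∀ i, 0 < σd1 i)
    (hUd1 : (fromCols Uhd1 Ucd1)ᵀ * fromCols Uhd1 Ucd1 = 1 ∧
            fromCols Uhd1 Ucd1 * (fromCols Uhd1 Ucd1)ᵀ = 1)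
    (hVd1 : (fromCols Vhd1 Vcd1)ᵀ * fromCols Vhd1 Vcd1 = 1 ∧
            fromCols Vhd1 Vcd1 * (fromCols Vhd1 Vcd1)ᵀ = 1)
    (hSd1 : Sd n₁ b₁ 0 = Uhd1 * Matrix.diagonal σd1 * Vhd1ᵀ)
    -- full orthogonal factorization `S_{r₁} = U_{r₁} Σ_{r₁} V_{r₁}ᵀ`
    (Ur1 : Matrix (Fin m) (Fin m) ℝ) (Sigr1 : Matrix (Fin m) (Fin p₁) ℝ)
    (Vr1 : Matrix (Fin p₁) (Fin p₁) ℝ)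
    (hUr1 : Ur1ᵀ * Ur1 = 1) (hUr1' : Ur1 * Ur1ᵀ = 1)
    (hVr1 : Vr1ᵀ * Vr1 = 1) (hVr1' : Vr1 * Vr1ᵀ = 1)
    (hSr1 : Sr1 = Ur1 * Sigr1 * Vr1ᵀ) :
    let n : ℕ := n₁ + n₂
    let Dp : Matrix (Fin m) (Fin m) ℝ := Matrix.diagonal fun i => if i ∈ Mp then 1 else 0
    let Dm : Matrix (Fin m) (Fin m) ℝ := Matrix.diagonal fun i => if i ∈ Mp then 0 else 1
    let H : Matrix (Fin n) (Fin (n + 1)) ℝ :=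
      Matrix.of fun i j =>
        if (i : ℕ) = n₁ - 1 ∧ (j : ℕ) = n₁ then -1
        else if (i : ℕ) = n₁ ∧ (j : ℕ) = n₁ then 1
        else 0
    let e : Fin n × Fin m ≃ (Fin n₁ × Fin m) ⊕ (Fin n₂ × Fin m) :=
      (Equiv.prodCongr finSumFinEquiv.symm (Equiv.refl (Fin m))).trans
        (Equiv.sumProdDistrib (Fin n₁) (Fin n₂) (Fin m))
    let Sreac : Matrix (Fin n × Fin m) ((Fin n₁ × Fin p₁) ⊕ (Fin n₂ × Fin p₂)) ℝ :=
      (fromBlocks ((1 : Matrix (Fin n₁) (Fin n₁) ℝ) ⊗ₖ Sr1) 0 0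
          ((1 : Matrix (Fin n₂) (Fin n₂) ℝ) ⊗ₖ Sr2)).submatrix e id
    let S : Matrix (Fin n × Fin m)
        (((Fin n₁ × Fin p₁) ⊕ (Fin n₂ × Fin p₂)) ⊕ (Fin (n + 1) × Fin m)) ℝ :=
      fromCols (γ • Sreac) (Sd n b₁ b₂ ⊗ₖ Dp + (Sd n b₁ b₂ - H) ⊗ₖ Dm)
    -- the stacked matrix `[−γ V̂_{d₁}; 0]`, reindexed to `Fin (n+1)` rows
    let stk : Matrix (Fin (n + 1)) (Fin qd1) ℝ :=
      (fromRows ((-γ) • Vhd1) (0 : Matrix (Fin n₂) (Fin qd1) ℝ)).submatrix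
        (fun i : Fin (n + 1) =>
          finSumFinEquiv.symm (finCongr (by omega : n₁ + n₂ + 1 = (n₁ + 1) + n₂) i)) id
    let N : Matrix (((Fin n₁ × Fin p₁) ⊕ (Fin n₂ × Fin p₂)) ⊕ (Fin (n + 1) × Fin m))
        (Fin qd1 × Fin p₁) ℝ :=
      fromRows
        (fromRows ((Uhd1 * Matrix.diagonal σd1) ⊗ₖ Vr1)
          (0 : Matrix (Fin n₂ × Fin p₂) (Fin qd1 × Fin p₁) ℝ))
        (stk ⊗ₖ (Ur1 * Sigr1))
    S * N = 0 ∧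
      LinearIndependent ℝ (fun j : Fin qd1 × Fin p₁ => fun i => N i j) := by
  intro n Dp Dm H e Sreac S stk N
  have hn : n = n₁ + n₂ := rfl
  -- orthonormality of the hatted factors
  have hVh : Vhd1ᵀ * Vhd1 = 1 := by
    have h := hVd1.1
    rw [transpose_fromCols, fromRows_mul_fromCols, ← fromBlocks_one] at h
    exact (fromBlocks_inj.mp h).1
  have hUh : Uhd1ᵀ * Uhd1 = 1 := by
    have h := hUd1.1
    rw [transpose_fromCols, fromRows_mul_fromCols, ← fromBlocks_one] at h
    exact (fromBlocks_inj.mp h).1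
  -- last row of Vhd1 vanishes
  have hVlast : ∀ q, Vhd1 (Fin.last n₁) q = 0 := by
    intro q
    have h0 : ∀ i : Fin n₁, Sd n₁ b₁ 0 i (Fin.last n₁) = 0 := by
      intro i
      have hi := i.isLt
      simp only [Sd, of_apply, Fin.val_last]
      split_ifs <;> first | rfl | omega | norm_num
    have h1 : (Uhd1ᵀ * Sd n₁ b₁ 0) q (Fin.last n₁) = 0 := by
      rw [mul_apply]
      exact Finset.sum_eq_zero fun i _ => by rw [h0 i, mul_zero]
    have h2 : Uhd1ᵀ * Sd n₁ b₁ 0 = Matrix.diagonal σd1 * Vhd1ᵀ := by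
      rw [hSd1, ← Matrix.mul_assoc, ← Matrix.mul_assoc, hUh, Matrix.one_mul]
    rw [h2, diagonal_mul] at h1
    have := (mul_eq_zero.mp h1).resolve_left (ne_of_gt (hσd1 q))
    simpa using this
  have hSV : Sd n₁ b₁ 0 * Vhd1 = Uhd1 * Matrix.diagonal σd1 := by
    rw [hSd1, Matrix.mul_assoc, hVh, Matrix.mul_one]
  -- H * stk = 0
  have hHstk : H * stk = 0 := by
    ext i q
    rw [mul_apply, Matrix.zero_apply]
    refine Finset.sum_eq_zero fun j _ => ?_
    by_cases hj : (j : ℕ) = n₁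
    · have hstkj : stk j q = 0 := by
        have hj' : finCongr (by omega : n₁ + n₂ + 1 = (n₁ + 1) + n₂) j
            = Fin.castAdd n₂ (Fin.last n₁) := by
          ext; simpa using hj
        simp only [stk, submatrix_apply, hj', finSumFinEquiv_symm_apply_castAdd,
          fromRows_apply_inl, Matrix.smul_apply, id_eq, hVlast q, smul_eq_mul, mul_zero]
      rw [hstkj, mul_zero]
    · have : H i j = 0 := by
        simp only [H, of_apply]
        split_ifs with hc1 hc2
        · exact absurd hc1.2 hj
        · exact absurd hc2.2 hj
        · rfl
      rw [this, zero_mul]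
  -- equivalences for reindexing
  have hn' : n + 1 = (n₁ + 1) + n₂ := by omega
  set eR : Fin n ≃ Fin n₁ ⊕ Fin n₂ := finSumFinEquiv.symm with heR
  set rE : Fin (n + 1) ≃ Fin (n₁ + 1) ⊕ Fin n₂ :=
    (finCongr hn').trans finSumFinEquiv.symm with hrE
  have hstk : stk = (fromRows ((-γ) • Vhd1) (0 : Matrix (Fin n₂) (Fin qd1) ℝ)).submatrix rE id := rfl
  -- the reindexed diffusion matrix
  set T : Matrix (Fin n₁ ⊕ Fin n₂) (Fin (n₁ + 1) ⊕ Fin n₂) ℝ :=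
    (Sd n b₁ b₂).submatrix eR.symm rE.symm with hT
  have hv1 : ∀ i : Fin n₁, ((eR.symm (Sum.inl i) : Fin n) : ℕ) = (i : ℕ) := by
    intro i; rfl
  have hv1' : ∀ i : Fin n₂, ((eR.symm (Sum.inr i) : Fin n) : ℕ) = n₁ + (i : ℕ) := by
    intro i; rfl
  have hv2 : ∀ j : Fin (n₁ + 1), ((rE.symm (Sum.inl j) : Fin (n + 1)) : ℕ) = (j : ℕ) := by
    intro j; simp [hrE]
  have hT11 : T.toBlocks₁₁ = Sd n₁ b₁ 1 := by
    ext i j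
    have hi := i.isLt
    have hj := j.isLt
    simp only [toBlocks₁₁, of_apply, hT, submatrix_apply, Sd, hv1, hv2]
    split_ifs <;> first | rfl | omega
  have hT21V : T.toBlocks₂₁ * ((-γ) • Vhd1) = 0 := by
    ext i q
    rw [mul_apply, Matrix.zero_apply]
    refine Finset.sum_eq_zero fun j _ => ?_
    by_cases hj : (j : ℕ) = n₁
    · have : Vhd1 j q = 0 := by
        rw [show j = Fin.last n₁ from Fin.ext (by simpa using hj)]; exact hVlast q
      simp [this]
    · have : T.toBlocks₂₁ i j = 0 := by
        have hj' := j.isLt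
        simp only [toBlocks₂₁, of_apply, hT, submatrix_apply, Sd, hv1', hv2]
        split_ifs <;> first | rfl | omega
      rw [this, zero_mul]
  have hSd11V : Sd n₁ b₁ 1 * Vhd1 = Uhd1 * Matrix.diagonal σd1 := by
    have heq : Sd n₁ b₁ 1 * Vhd1 = Sd n₁ b₁ 0 * Vhd1 := by
      ext i q
      rw [mul_apply, mul_apply]
      refine Finset.sum_congr rfl fun j _ => ?_
      by_cases hj : (j : ℕ) = n₁
      · have : Vhd1 j q = 0 := by
          rw [show j = Fin.last n₁ from Fin.ext (by simpa using hj)]; exact hVlast q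
        rw [this, mul_zero, mul_zero]
      · congr 1
        have hi := i.isLt
        have hj' := j.isLt
        simp only [Sd, of_apply]
        split_ifs <;> first | rfl | omega
    rw [heq, hSV]
  -- key: Sd n * stk
  have key : Sd n b₁ b₂ * stk
      = (-γ) • (fromRows (Uhd1 * Matrix.diagonal σd1)
          (0 : Matrix (Fin n₂) (Fin qd1) ℝ)).submatrix eR id := by
    have h1 : (Sd n b₁ b₂) = T.submatrix eR rE := by
      simp [hT, submatrix_submatrix]
    rw [hstk, h1]
    have h2 := submatrix_mul_equiv T (fromRows ((-γ) • Vhd1) (0 : Matrix (Fin n₂) (Fin qd1) ℝ))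
      (⇑eR) rE id
    rw [h2]
    rw [← fromBlocks_toBlocks T, fromBlocks_mul_fromRows']
    rw [Matrix.mul_zero, Matrix.mul_zero, add_zero, add_zero, hT11, hT21V]
    rw [Matrix.mul_smul, hSd11V]
    ext i q
    rcases h' : eR i with i₁ | i₂ <;>
      simp [h', fromRows_apply_inl, fromRows_apply_inr, submatrix_apply]
  -- Dp + Dm = 1
  have hDpm : Dp + Dm = (1 : Matrix (Fin m) (Fin m) ℝ) := by
    simp only [Dp, Dm, diagonal_add]
    rw [show (fun i => (if i ∈ Mp then (1:ℝ) else 0) + (if i ∈ Mp then 0 else 1)) = fun _ => 1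
      from funext fun i => by split_ifs <;> ring, diagonal_one]
  -- reaction part
  have hreac : Sreac * fromRows ((Uhd1 * Matrix.diagonal σd1) ⊗ₖ Vr1)
        (0 : Matrix (Fin n₂ × Fin p₂) (Fin qd1 × Fin p₁) ℝ)
      = (fromRows ((Uhd1 * Matrix.diagonal σd1) ⊗ₖ (Ur1 * Sigr1))
          (0 : Matrix (Fin n₂ × Fin m) (Fin qd1 × Fin p₁) ℝ)).submatrix e id := by
    have h2 := submatrix_mul_equiv
      (fromBlocks ((1 : Matrix (Fin n₁) (Fin n₁) ℝ) ⊗ₖ Sr1) 0 0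
        ((1 : Matrix (Fin n₂) (Fin n₂) ℝ) ⊗ₖ Sr2))
      (fromRows ((Uhd1 * Matrix.diagonal σd1) ⊗ₖ Vr1)
        (0 : Matrix (Fin n₂ × Fin p₂) (Fin qd1 × Fin p₁) ℝ))
      (⇑e) (Equiv.refl _) id
    simp only [Equiv.coe_refl, submatrix_id_id] at h2
    rw [show Sreac = (fromBlocks ((1 : Matrix (Fin n₁) (Fin n₁) ℝ) ⊗ₖ Sr1) 0 0
        ((1 : Matrix (Fin n₂) (Fin n₂) ℝ) ⊗ₖ Sr2)).submatrix e id from rfl, h2]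
    congr 1
    rw [fromBlocks_mul_fromRows']
    rw [Matrix.mul_zero, Matrix.mul_zero, Matrix.zero_mul, add_zero, zero_add]
    congr 1
    rw [← mul_kronecker_mul, Matrix.one_mul, hSr1, Matrix.mul_assoc, hVr1, Matrix.mul_one]
  -- diffusion part
  have hdiff : (Sd n b₁ b₂ ⊗ₖ Dp + (Sd n b₁ b₂ - H) ⊗ₖ Dm) * (stk ⊗ₖ (Ur1 * Sigr1))
      = (Sd n b₁ b₂ * stk) ⊗ₖ (Ur1 * Sigr1) := by
    rw [Matrix.add_mul, ← mul_kronecker_mul, ← mul_kronecker_mul, Matrix.sub_mul, hHstk, sub_zero,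
      ← kronecker_add, ← Matrix.add_mul, hDpm, Matrix.one_mul]
  -- kronecker of the reindexed fromRows
  have hkr : ((fromRows (Uhd1 * Matrix.diagonal σd1)
        (0 : Matrix (Fin n₂) (Fin qd1) ℝ)).submatrix eR id) ⊗ₖ (Ur1 * Sigr1)
      = (fromRows ((Uhd1 * Matrix.diagonal σd1) ⊗ₖ (Ur1 * Sigr1))
          (0 : Matrix (Fin n₂ × Fin m) (Fin qd1 × Fin p₁) ℝ)).submatrix e id := by
    ext ⟨i, k⟩ ⟨q, l⟩
    have he : (e (i, k) : (Fin n₁ × Fin m) ⊕ (Fin n₂ × Fin m))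
        = Sum.map (fun i₁ => (i₁, k)) (fun i₂ => (i₂, k)) (eR i) := by
      show (Equiv.sumProdDistrib (Fin n₁) (Fin n₂) (Fin m)) (finSumFinEquiv.symm i, k) = _
      show (Equiv.sumProdDistrib (Fin n₁) (Fin n₂) (Fin m)) (eR i, k) = _
      rcases eR i with i₁ | i₂ <;> simp
    simp only [kronecker_apply, submatrix_apply, id_eq]
    rw [he]
    rcases eR i with i₁ | i₂
    · simp [fromRows_apply_inl, kronecker_apply]
    · simp [fromRows_apply_inr]
  refine ⟨?_, ?_⟩
  · -- S * N = 0
    show fromCols (γ • Sreac) (Sd n b₁ b₂ ⊗ₖ Dp + (Sd n b₁ b₂ - H) ⊗ₖ Dm) *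
      fromRows (fromRows ((Uhd1 * Matrix.diagonal σd1) ⊗ₖ Vr1)
          (0 : Matrix (Fin n₂ × Fin p₂) (Fin qd1 × Fin p₁) ℝ))
        (stk ⊗ₖ (Ur1 * Sigr1)) = 0
    rw [fromCols_mul_fromRows, Matrix.smul_mul, hreac, hdiff, key, smul_kronecker, hkr]
    rw [← add_smul]
    simp
  · -- linear independence
    rw [Fintype.linearIndependent_iff]
    intro c hc j0
    set M : Matrix (Fin n₁ × Fin p₁) (Fin qd1 × Fin p₁) ℝ :=
      (Uhd1 * Matrix.diagonal σd1) ⊗ₖ Vr1 with hM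
    have hMv : M *ᵥ c = 0 := by
      funext p
      have h := congrFun hc (Sum.inl (Sum.inl p))
      simp only [Finset.sum_apply, Pi.smul_apply, Pi.zero_apply, smul_eq_mul] at h
      show ∑ j, M p j * c j = 0
      rw [← h]
      refine Finset.sum_congr rfl fun j _ => ?_
      show M p j * c j = c j * N (Sum.inl (Sum.inl p)) j
      rw [show N (Sum.inl (Sum.inl p)) j = M p j from rfl, mul_comm]
    have hG : (Mᵀ * M) *ᵥ c = 0 := by rw [← mulVec_mulVec, hMv, mulVec_zero]
    have hGd : Mᵀ * M = Matrix.diagonal (fun j : Fin qd1 × Fin p₁ => σd1 j.1 * σd1 j.1) := by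
      have hMt : Mᵀ = (Uhd1 * Matrix.diagonal σd1)ᵀ ⊗ₖ Vr1ᵀ := by
        rw [hM, kroneckerMap_transpose]
      rw [hMt, hM, ← mul_kronecker_mul]
      have h1 : (Uhd1 * Matrix.diagonal σd1)ᵀ * (Uhd1 * Matrix.diagonal σd1)
          = Matrix.diagonal (fun i => σd1 i * σd1 i) := by
        rw [transpose_mul, diagonal_transpose, Matrix.mul_assoc, ← Matrix.mul_assoc Uhd1ᵀ, hUh, Matrix.one_mul,
          diagonal_mul_diagonal]
      rw [h1, hVr1, ← diagonal_one, diagonal_kronecker_diagonal]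
      simp only [mul_one]
    rw [hGd] at hG
    have := congrFun hG j0
    rw [mulVec_diagonal] at this
    have hσ : σd1 j0.1 * σd1 j0.1 ≠ 0 := mul_ne_zero (ne_of_gt (hσd1 j0.1)) (ne_of_gt (hσd1 j0.1))
    exact (mul_eq_zero.mp this).resolve_left hσ
end
end

section
/- Let n₁, n₂ ≥ 1, n = n₁ + n₂, C₁ = √(n₁/n), C₂ = √(n₂/n). Let [Û_d, ŭ] be an orthogonal n × n matrix whose last column is the constant unit vector ŭ with every entry equal to 1/√n (so Û_d is n × (n−1)). Write Û_{d,s₁} for the matrix of the first n₁ rows of Û_d and Û_{d,s₂} for the matrix of the last n₂ rows, and similarly write ŭ_{s₁} ∈ ℝ^{n₁} and ŭ_{s₂} ∈ ℝ^{n₂} for the corresponding parts of ŭ. Then Û_{d,s₁} Û_dᵀ · [(1/C₁)·ŭ_{s₁}; −(1/C₂)·ŭ_{s₂}] = (1/C₁)·((n₂ + √(n₁n₂))/n)·ŭ_{s₁}, and Û_{d,s₂} Û_dᵀ · [(1/C₁)·ŭ_{s₁}; −(1/C₂)·ŭ_{s₂}] = −(1/C₂)·((n₁ + √(n₁n₂))/n)·ŭ_{s₂}.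 -/
open Matrix
open scoped Matrix

noncomputable section

/-- key computation for the asymptotic nullspace basis. `[Û_d, ŭ]` is an
orthogonal `n × n` matrix whose last column `ŭ` is the constant unit vector with entries
`1/√n`, where `n = n₁ + n₂`. -/
theorem stmt19 (n₁ n₂ : ℕ) (h₁ : 1 ≤ n₁) (h₂ : 1 ≤ n₂)
    (Uhd : Matrix (Fin (n₁ + n₂)) (Fin (n₁ + n₂ - 1)) ℝ)
    (horth :
      (fromCols Uhd (Matrix.of fun (_ : Fin (n₁ + n₂)) (_ : Fin 1) =>
          1 / Real.sqrt ((n₁ : ℝ) + n₂)))ᵀ *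
        fromCols Uhd (Matrix.of fun (_ : Fin (n₁ + n₂)) (_ : Fin 1) =>
          1 / Real.sqrt ((n₁ : ℝ) + n₂)) = 1) :
    let C₁ : ℝ := Real.sqrt ((n₁ : ℝ) / ((n₁ : ℝ) + n₂))
    let C₂ : ℝ := Real.sqrt ((n₂ : ℝ) / ((n₁ : ℝ) + n₂))
    -- the vector `[(1/C₁)·ŭ_{s₁}; −(1/C₂)·ŭ_{s₂}]`
    let v : Fin (n₁ + n₂) → ℝ := fun i =>
      if (i : ℕ) < n₁ then (1 / C₁) * (1 / Real.sqrt ((n₁ : ℝ) + n₂))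
      else -((1 / C₂) * (1 / Real.sqrt ((n₁ : ℝ) + n₂)))
    -- first identity (rows `s₁`, i.e. the first `n₁` rows of `Û_d`)
    ((Uhd.submatrix (Fin.castAdd n₂) id * Uhdᵀ) *ᵥ v =
      fun _ : Fin n₁ =>
        (1 / C₁) * (((n₂ : ℝ) + Real.sqrt ((n₁ : ℝ) * n₂)) / ((n₁ : ℝ) + n₂)) *
          (1 / Real.sqrt ((n₁ : ℝ) + n₂))) ∧
    -- second identity (rows `s₂`, i.e. the last `n₂` rows of `Û_d`)
    ((Uhd.submatrix (Fin.natAdd n₁) id * Uhdᵀ) *ᵥ v =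
      fun _ : Fin n₂ =>
        -((1 / C₂) * (((n₁ : ℝ) + Real.sqrt ((n₁ : ℝ) * n₂)) / ((n₁ : ℝ) + n₂)) *
          (1 / Real.sqrt ((n₁ : ℝ) + n₂)))) := by
  intro C₁ C₂ v
  have hn1 : (0:ℝ) < n₁ := by exact_mod_cast Nat.lt_of_lt_of_le Nat.zero_lt_one h₁
  have hn2 : (0:ℝ) < n₂ := by exact_mod_cast Nat.lt_of_lt_of_le Nat.zero_lt_one h₂
  have hn : (0:ℝ) < (n₁:ℝ) + n₂ := by linarith
  set sn := Real.sqrt ((n₁:ℝ) + n₂) with hsn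
  set s1 := Real.sqrt (n₁:ℝ) with hs1
  set s2 := Real.sqrt (n₂:ℝ) with hs2
  have hsnp : 0 < sn := Real.sqrt_pos.mpr hn
  have hs1p : 0 < s1 := Real.sqrt_pos.mpr hn1
  have hs2p : 0 < s2 := Real.sqrt_pos.mpr hn2
  have hsnsq : sn ^ 2 = (n₁:ℝ) + n₂ := Real.sq_sqrt hn.le
  have hs1sq : s1 ^ 2 = (n₁:ℝ) := Real.sq_sqrt hn1.le
  have hs2sq : s2 ^ 2 = (n₂:ℝ) := Real.sq_sqrt hn2.le
  have hC₁ : C₁ = s1 / sn := Real.sqrt_div hn1.le _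
  have hC₂ : C₂ = s2 / sn := Real.sqrt_div hn2.le _
  have hmul : Real.sqrt ((n₁:ℝ) * n₂) = s1 * s2 := Real.sqrt_mul hn1.le _
  set uM : Matrix (Fin (n₁ + n₂)) (Fin 1) ℝ :=
    Matrix.of fun _ _ => 1 / sn with huM
  -- from Qᵀ Q = 1 deduce Q Qᵀ = 1
  have e : Fin (n₁ + n₂) ≃ Fin (n₁ + n₂ - 1) ⊕ Fin 1 :=
    (finCongr (by omega)).trans finSumFinEquiv.symm
  have h2 : fromCols Uhd uM * (fromCols Uhd uM)ᵀ = 1 := by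
    rw [transpose_fromCols, fromCols_mul_fromRows_eq_one_comm e]
    rw [transpose_fromCols] at horth
    exact horth
  rw [transpose_fromCols, fromCols_mul_fromRows] at h2
  have hUU : Uhd * Uhdᵀ = 1 - uM * uMᵀ := by
    rw [← h2]; abel
  have hentry : ∀ p q, (uM * uMᵀ) p q = 1 / ((n₁:ℝ) + n₂) := by
    intro p q
    simp only [Matrix.mul_apply, Finset.univ_unique, Finset.sum_singleton,
      transpose_apply, huM, Matrix.of_apply]
    rw [div_mul_div_comm, one_mul, ← Real.sqrt_mul hn.le, Real.sqrt_mul_self hn.le]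
  -- value of v on each block
  have hva : ∀ i : Fin n₁, v (Fin.castAdd n₂ i) = (1 / C₁) * (1 / sn) := by
    intro i; simp only [v]; rw [if_pos]; exact i.isLt
  have hvb : ∀ i : Fin n₂, v (Fin.natAdd n₁ i) = -((1 / C₂) * (1 / sn)) := by
    intro i; simp only [v]; rw [if_neg]; simp [Fin.natAdd]
  -- sum of v
  have hS : ∑ j, v j = (n₁:ℝ) * ((1 / C₁) * (1 / sn)) - (n₂:ℝ) * ((1 / C₂) * (1 / sn)) := by
    rw [Fin.sum_univ_add]
    simp only [hva, hvb, Finset.sum_const, Finset.card_univ, Fintype.card_fin, nsmul_eq_mul]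
    ring
  -- rows computation
  have hrow : ∀ {m : ℕ} (f : Fin m → Fin (n₁ + n₂)) (i : Fin m),
      ((Uhd.submatrix f id * Uhdᵀ) *ᵥ v) i =
        v (f i) - (1 / ((n₁:ℝ) + n₂)) * ∑ j, v j := by
    intro m f i
    have : ((Uhd.submatrix f id * Uhdᵀ) *ᵥ v) i = ((Uhd * Uhdᵀ) *ᵥ v) (f i) := by
      simp [Matrix.mulVec, Matrix.mul_apply, dotProduct]
    rw [this, hUU, Matrix.sub_mulVec, Matrix.one_mulVec]
    simp only [Pi.sub_apply]
    congr 1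
    simp only [Matrix.mulVec, dotProduct, hentry, Finset.mul_sum]
  constructor <;> funext i <;> rw [hrow]
  · rw [hva, hS, hC₁, hC₂, hmul, ← hs1sq, ← hs2sq]
    have h' : sn ^ 2 = s1 ^ 2 + s2 ^ 2 := by rw [hsnsq, hs1sq, hs2sq]
    field_simp
    ring
  · rw [hvb, hS, hC₁, hC₂, hmul, ← hs1sq, ← hs2sq]
    have h' : sn ^ 2 = s1 ^ 2 + s2 ^ 2 := by rw [hsnsq, hs1sq, hs2sq]
    field_simp
    ring
end
end
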